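/- Let X = (ξ₁, ξ₂) be a random vector in ℝ² with density p satisfying ∫∫ p(x₁,x₂)² e^{(x₁²+x₂²)/2} dx₁ dx₂ < ∞. Then χ²(X, Z) ≥ χ²(ξ₁, ζ) + χ²(ξ₂, ζ), where Z is standard normal in ℝ² and ζ ~ N(0,1). -/

import Mathlib

open MeasureTheory

/-- The standard normal density on the real line. -/
noncomputable def stdNormalPDF (x : ℝ) : ℝ :=
  (Real.sqrt (2 * Real.pi))⁻¹ * Real.exp (-x ^ 2 / 2)


lemma phi_pos (x : ℝ) : 0 < stdNormalPDF x := by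
  unfold stdNormalPDF
  positivity

lemma phi_ne (x : ℝ) : stdNormalPDF x ≠ 0 := (phi_pos x).ne'

lemma phi_cont : Continuous stdNormalPDF := by
  unfold stdNormalPDF; fun_prop

lemma phi_integrable : Integrable stdNormalPDF := by
  have h : Integrable (fun x : ℝ => Real.exp (-(1/2 : ℝ) * x ^ 2)) := by
    exact integrable_exp_neg_mul_sq (by norm_num)
  have := h.const_mul (Real.sqrt (2 * Real.pi))⁻¹
  refine this.congr ?_
  filter_upwards with x
  unfold stdNormalPDF
  ring_nf

lemma phi_integral : ∫ x, stdNormalPDF x = 1 := by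
  unfold stdNormalPDF
  rw [MeasureTheory.integral_const_mul]
  have h : (∫ x : ℝ, Real.exp (-x ^ 2 / 2)) = Real.sqrt (2 * Real.pi) := by
    have := integral_gaussian (1/2 : ℝ)
    simp_rw [show ∀ x : ℝ, -(1/2 : ℝ) * x ^ 2 = -x ^ 2 / 2 by intro x; ring] at this
    rw [this, show Real.pi / (1/2:ℝ) = 2 * Real.pi by ring]
  rw [h, inv_mul_cancel₀]
  positivity

lemma cs_slice (f : ℝ → ℝ) (hm : Measurable f) (h0 : ∀ y, 0 ≤ f y)
    (h2 : Integrable (fun y => f y ^ 2 / stdNormalPDF y)) :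
    (∫ y, f y) ^ 2 ≤ ∫ y, f y ^ 2 / stdNormalPDF y := by
  set φ := stdNormalPDF
  set u : ℝ → ℝ := fun y => f y / Real.sqrt (φ y) with hu
  set v : ℝ → ℝ := fun y => Real.sqrt (φ y) with hv
  have hsq : ∀ y, Real.sqrt (φ y) ^ 2 = φ y := fun y => Real.sq_sqrt (phi_pos y).le
  have hsqpos : ∀ y, 0 < Real.sqrt (φ y) := fun y => Real.sqrt_pos.2 (phi_pos y)
  have huv : ∀ y, u y * v y = f y := by
    intro y; simp only [hu, hv]
    rw [div_mul_eq_mul_div, mul_div_assoc, div_self (hsqpos y).ne', mul_one]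
  have hu2 : ∀ y, u y ^ 2 = f y ^ 2 / φ y := by
    intro y; simp only [hu]; rw [div_pow, hsq]
  have hv2 : ∀ y, v y ^ 2 = φ y := fun y => hsq y
  have hum : AEStronglyMeasurable u volume := by
    apply Measurable.aestronglyMeasurable
    exact hm.div (Real.continuous_sqrt.comp phi_cont).measurable
  have hvm : AEStronglyMeasurable v volume := by
    apply Measurable.aestronglyMeasurable
    exact (Real.continuous_sqrt.comp phi_cont).measurable
  have hMu : MemLp u 2 volume := by
    rw [memLp_two_iff_integrable_sq hum]
    exact h2.congr (by filter_upwards with y; rw [hu2 y])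
  have hMv : MemLp v 2 volume := by
    rw [memLp_two_iff_integrable_sq hvm]
    exact phi_integrable.congr (by filter_upwards with y; rw [hv2 y])
  have hpq : (2 : ℝ).HolderConjugate 2 := Real.holderConjugate_iff.mpr ⟨by norm_num, by norm_num⟩
  have hH := MeasureTheory.integral_mul_le_Lp_mul_Lq_of_nonneg (μ := volume) hpq
    (f := u) (g := v)
    (by filter_upwards with y; exact div_nonneg (h0 y) (Real.sqrt_nonneg _))
    (by filter_upwards with y; exact Real.sqrt_nonneg _)
    (by simpa using hMu) (by simpa using hMv)
  simp_rw [show ∀ y, u y * v y = f y from huv] at hH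
  have hrw : ∀ (w : ℝ → ℝ), (∫ a, w a ^ (2:ℝ)) = ∫ a, w a ^ 2 := by
    intro w
    congr 1
    funext a
    rw [show (2:ℝ) = ((2:ℕ):ℝ) by norm_num, Real.rpow_natCast]
  rw [hrw u, hrw v] at hH
  simp_rw [hu2, hv2] at hH
  rw [phi_integral, Real.one_rpow, mul_one] at hH
  have hX : 0 ≤ ∫ y, f y ^ 2 / φ y :=
    integral_nonneg fun y => div_nonneg (sq_nonneg _) (phi_pos y).le
  have hf0 : 0 ≤ ∫ y, f y := integral_nonneg h0
  calc (∫ y, f y) ^ 2 ≤ ((∫ y, f y ^ 2 / φ y) ^ ((1:ℝ)/2)) ^ 2 := by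
        exact pow_le_pow_left₀ hf0 hH 2
    _ = ∫ y, f y ^ 2 / φ y := by
        rw [← Real.rpow_natCast ((∫ y, f y ^ 2 / φ y) ^ ((1:ℝ)/2)) 2,
          ← Real.rpow_mul hX]
        norm_num

lemma marginal_aux (p : ℝ × ℝ → ℝ) (hpm : Measurable p) (hp : ∀ x, 0 ≤ p x)
    (hpint : Integrable p ((volume : Measure ℝ).prod volume))
    (hT : Integrable (fun x : ℝ × ℝ => p x ^ 2 / (stdNormalPDF x.1 * stdNormalPDF x.2))
      ((volume : Measure ℝ).prod volume)) :
    Integrable (fun a => (∫ y, p (a, y)) ^ 2 / stdNormalPDF a) volume ∧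
    Integrable (fun x : ℝ × ℝ => p x * ((∫ y, p (x.1, y)) / stdNormalPDF x.1))
      ((volume : Measure ℝ).prod volume) ∧
    (∫ x : ℝ × ℝ, p x * ((∫ y, p (x.1, y)) / stdNormalPDF x.1)
        ∂((volume : Measure ℝ).prod volume))
      = ∫ a, (∫ y, p (a, y)) ^ 2 / stdNormalPDF a := by
  set φ := stdNormalPDF with hφdef
  set p₁ : ℝ → ℝ := fun a => ∫ y, p (a, y) with hp₁def
  have hp₁0 : ∀ a, 0 ≤ p₁ a := fun a => integral_nonneg fun y => hp _
  have hp₁m : AEStronglyMeasurable p₁ volume :=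
    hpm.aestronglyMeasurable.integral_prod_right'
  have hinv : Continuous fun a => (stdNormalPDF a)⁻¹ := phi_cont.inv₀ phi_ne
  set G : ℝ → ℝ := fun a => ∫ y, p (a, y) ^ 2 / (φ a * φ y) with hGdef
  have hGint : Integrable G volume := hT.integral_prod_left
  have key : ∀ᵐ a : ℝ ∂volume, p₁ a ^ 2 / φ a ≤ G a := by
    filter_upwards [hT.prod_right_ae] with a ha2
    have hne1 : φ a ≠ 0 := phi_ne a
    have ha2' : Integrable (fun y => p (a, y) ^ 2 / φ y) volume := by
      have h := ha2.const_mul (φ a)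
      refine h.congr (Filter.Eventually.of_forall fun y => ?_)
      have hne2 : φ y ≠ 0 := phi_ne y
      field_simp
    have hcs := cs_slice (fun y => p (a, y)) (hpm.comp measurable_prodMk_left)
      (fun y => hp _) ha2'
    have hGa : G a = (φ a)⁻¹ * ∫ y, p (a, y) ^ 2 / φ y := by
      rw [← MeasureTheory.integral_const_mul]
      show (∫ y, p (a, y) ^ 2 / (φ a * φ y)) = _
      refine integral_congr_ae (Filter.Eventually.of_forall fun y => ?_)
      have hne2 : φ y ≠ 0 := phi_ne y
      field_simp
    rw [hGa, div_eq_inv_mul]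
    exact mul_le_mul_of_nonneg_left hcs (inv_nonneg.2 (phi_pos a).le)
  have hm1 : AEStronglyMeasurable (fun a => p₁ a ^ 2 / φ a) volume := by
    refine ((hp₁m.mul hp₁m).mul hinv.aestronglyMeasurable).congr ?_
    filter_upwards with a
    simp only [Pi.mul_apply]
    rw [pow_two, div_eq_mul_inv]
  have int_h1 : Integrable (fun a => p₁ a ^ 2 / φ a) volume := by
    refine Integrable.mono' hGint hm1 ?_
    filter_upwards [key] with a hk
    rw [Real.norm_of_nonneg (div_nonneg (sq_nonneg _) (phi_pos a).le)]
    exact hk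
  have hbnd : ∀ x : ℝ × ℝ, p x * (p₁ x.1 / φ x.1)
      ≤ (p x ^ 2 / (φ x.1 * φ x.2) + p₁ x.1 ^ 2 / φ x.1 * φ x.2) / 2 := by
    intro x
    have h1 : 0 < φ x.1 := phi_pos _
    have h2 : 0 < φ x.2 := phi_pos _
    have hd : (0 : ℝ) < 2 * (φ x.1 * φ x.2) := by positivity
    have e1 : p x * (p₁ x.1 / φ x.1)
        = (2 * (p x * (p₁ x.1 * φ x.2))) / (2 * (φ x.1 * φ x.2)) := by
      field_simp
    have e2 : (p x ^ 2 / (φ x.1 * φ x.2) + p₁ x.1 ^ 2 / φ x.1 * φ x.2) / 2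
        = (p x ^ 2 + (p₁ x.1 * φ x.2) ^ 2) / (2 * (φ x.1 * φ x.2)) := by
      field_simp
    rw [e1, e2, div_le_div_iff₀ hd hd]
    refine mul_le_mul_of_nonneg_right ?_ hd.le
    have := two_mul_le_add_sq (p x) (p₁ x.1 * φ x.2)
    linarith
  have hq₁m : AEStronglyMeasurable (fun a => p₁ a / φ a) volume := by
    refine (hp₁m.mul hinv.aestronglyMeasurable).congr ?_
    filter_upwards with a
    simp only [Pi.mul_apply]
    rw [div_eq_mul_inv]
  have hmt5 : AEStronglyMeasurable (fun x : ℝ × ℝ => p x * (p₁ x.1 / φ x.1))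
      ((volume : Measure ℝ).prod volume) := by
    have h1 : AEStronglyMeasurable (fun x : ℝ × ℝ => p₁ x.1 / φ x.1)
        ((volume : Measure ℝ).prod volume) :=
      hq₁m.comp_quasiMeasurePreserving MeasureTheory.Measure.quasiMeasurePreserving_fst
    exact hpm.aestronglyMeasurable.mul h1
  have int_t5 : Integrable (fun x : ℝ × ℝ => p x * (p₁ x.1 / φ x.1))
      ((volume : Measure ℝ).prod volume) := by
    refine Integrable.mono' ((hT.add (int_h1.mul_prod phi_integrable)).div_const 2) hmt5 ?_
    filter_upwards with x
    rw [Real.norm_of_nonneg (mul_nonneg (hp x) (div_nonneg (hp₁0 _) (phi_pos _).le))]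
    exact hbnd x
  refine ⟨int_h1, int_t5, ?_⟩
  have h2 : (∫ x : ℝ × ℝ, p x * (p₁ x.1 / φ x.1) ∂((volume : Measure ℝ).prod volume))
      = ∫ x : ℝ, ∫ y : ℝ, p (x, y) * (p₁ x / φ x) :=
    (MeasureTheory.integral_integral (f := fun a y => p (a, y) * (p₁ a / φ a)) int_t5).symm
  refine h2.trans ?_
  refine integral_congr_ae (Filter.Eventually.of_forall fun a => ?_)
  show (∫ y, p (a, y) * (p₁ a / φ a)) = p₁ a ^ 2 / φ a
  rw [MeasureTheory.integral_mul_const]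
  have hra : (∫ y, p (a, y)) = p₁ a := rfl
  rw [hra]; ring


/-- Superadditivity of the χ²-divergence from the standard normal law with respect to the
two coordinate marginals: if `X = (ξ₁, ξ₂)` has density `p` on `ℝ²` with
`∫∫ p² e^{(x₁²+x₂²)/2} < ∞`, then `χ²(X, Z) ≥ χ²(ξ₁, ζ) + χ²(ξ₂, ζ)`. -/
theorem chiSq_superadditive (p : ℝ × ℝ → ℝ) (hpm : Measurable p)
    (hp : ∀ x, 0 ≤ p x) (hdens : (∫ x : ℝ × ℝ, p x) = 1)
    (hfin : Integrable (fun x : ℝ × ℝ => p x ^ 2 * Real.exp ((x.1 ^ 2 + x.2 ^ 2) / 2))) :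
    ((∫ x₁ : ℝ, (∫ x₂ : ℝ, p (x₁, x₂)) ^ 2 / stdNormalPDF x₁) - 1) +
      ((∫ x₂ : ℝ, (∫ x₁ : ℝ, p (x₁, x₂)) ^ 2 / stdNormalPDF x₂) - 1)
      ≤ (∫ x : ℝ × ℝ, p x ^ 2 / (stdNormalPDF x.1 * stdNormalPDF x.2)) - 1 := by
  have hπ2 : (0 : ℝ) < 2 * Real.pi := by positivity
  have int_p : Integrable p volume := by
    by_contra h
    rw [MeasureTheory.integral_undef h] at hdens
    norm_num at hdens
  have heq : ∀ x : ℝ × ℝ, p x ^ 2 / (stdNormalPDF x.1 * stdNormalPDF x.2)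
      = (2 * Real.pi) * (p x ^ 2 * Real.exp ((x.1 ^ 2 + x.2 ^ 2) / 2)) := by
    intro x
    unfold stdNormalPDF
    rw [show ((Real.sqrt (2 * Real.pi))⁻¹ * Real.exp (-x.1 ^ 2 / 2))
        * ((Real.sqrt (2 * Real.pi))⁻¹ * Real.exp (-x.2 ^ 2 / 2))
        = (Real.sqrt (2 * Real.pi) * Real.sqrt (2 * Real.pi))⁻¹
          * (Real.exp (-x.1 ^ 2 / 2) * Real.exp (-x.2 ^ 2 / 2)) by rw [mul_inv]; ring]
    rw [Real.mul_self_sqrt hπ2.le, ← Real.exp_add,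
      show -x.1 ^ 2 / 2 + -x.2 ^ 2 / 2 = -((x.1 ^ 2 + x.2 ^ 2) / 2) by ring,
      Real.exp_neg]
    have hE : Real.exp ((x.1 ^ 2 + x.2 ^ 2) / 2) ≠ 0 := Real.exp_ne_zero _
    field_simp
  have intT : Integrable (fun x : ℝ × ℝ => p x ^ 2 / (stdNormalPDF x.1 * stdNormalPDF x.2))
      volume := by
    have h := hfin.const_mul (2 * Real.pi)
    exact h.congr (Filter.Eventually.of_forall fun x => (heq x).symm)
  obtain ⟨ih1, it5, e5⟩ := marginal_aux p hpm hp int_p intT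
  have hqm : Measurable fun z : ℝ × ℝ => p (z.2, z.1) := hpm.comp measurable_swap
  have intq : Integrable (fun z : ℝ × ℝ => p (z.2, z.1))
      ((volume : Measure ℝ).prod volume) := Integrable.swap (f := p) int_p
  have intTq : Integrable
      (fun z : ℝ × ℝ => p (z.2, z.1) ^ 2 / (stdNormalPDF z.1 * stdNormalPDF z.2))
      ((volume : Measure ℝ).prod volume) := by
    have h := Integrable.swap
      (f := fun x : ℝ × ℝ => p x ^ 2 / (stdNormalPDF x.1 * stdNormalPDF x.2)) intT
    refine h.congr (Filter.Eventually.of_forall fun z => ?_)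
    show p (z.2, z.1) ^ 2 / (stdNormalPDF z.2 * stdNormalPDF z.1) = _
    rw [mul_comm (stdNormalPDF z.2) (stdNormalPDF z.1)]
  obtain ⟨ih2, it6, e6⟩ := marginal_aux (fun z : ℝ × ℝ => p (z.2, z.1)) hqm
    (fun z => hp _) intq intTq
  beta_reduce at ih2 it6 e6
  set A := ∫ x₁ : ℝ, (∫ x₂ : ℝ, p (x₁, x₂)) ^ 2 / stdNormalPDF x₁ with hA
  set B := ∫ x₂ : ℝ, (∫ x₁ : ℝ, p (x₁, x₂)) ^ 2 / stdNormalPDF x₂ with hB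
  set Tt := ∫ x : ℝ × ℝ, p x ^ 2 / (stdNormalPDF x.1 * stdNormalPDF x.2) with hTt
  -- marginals
  have int_P1 : Integrable (fun a : ℝ => ∫ y, p (a, y)) volume := int_p.integral_prod_left
  have int_P2 : Integrable (fun b : ℝ => ∫ y, p (y, b)) volume := intq.integral_prod_left
  have hP1_int : (∫ a : ℝ, ∫ y : ℝ, p (a, y)) = 1 := by
    have h := MeasureTheory.integral_integral (μ := (volume : Measure ℝ))
      (ν := (volume : Measure ℝ)) (f := fun a y => p (a, y)) int_p
    beta_reduce at h
    exact h.trans hdens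
  have hP2_int : (∫ b : ℝ, ∫ y : ℝ, p (y, b)) = 1 := by
    have hq1 : (∫ z : ℝ × ℝ, p (z.2, z.1) ∂((volume : Measure ℝ).prod volume)) = 1 :=
      (MeasureTheory.integral_prod_swap p).trans hdens
    have h := MeasureTheory.integral_integral (μ := (volume : Measure ℝ))
      (ν := (volume : Measure ℝ)) (f := fun b y => p (y, b)) intq
    beta_reduce at h
    exact h.trans hq1
  -- abbreviations for the ten integrands
  set t1 : ℝ × ℝ → ℝ := fun z => p z ^ 2 / (stdNormalPDF z.1 * stdNormalPDF z.2) with ht1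
  set t2 : ℝ × ℝ → ℝ := fun z => (∫ y, p (z.1, y)) ^ 2 / stdNormalPDF z.1 * stdNormalPDF z.2
    with ht2
  set t3 : ℝ × ℝ → ℝ := fun z => stdNormalPDF z.1 * ((∫ y, p (y, z.2)) ^ 2 / stdNormalPDF z.2)
    with ht3
  set t4 : ℝ × ℝ → ℝ := fun z => stdNormalPDF z.1 * stdNormalPDF z.2 with ht4
  set t5 : ℝ × ℝ → ℝ := fun z => p z * ((∫ y, p (z.1, y)) / stdNormalPDF z.1) with ht5
  set t6 : ℝ × ℝ → ℝ := fun z => p z * ((∫ y, p (y, z.2)) / stdNormalPDF z.2) with ht6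
  set t8 : ℝ × ℝ → ℝ := fun z => (∫ y, p (z.1, y)) * (∫ y, p (y, z.2)) with ht8
  set t9 : ℝ × ℝ → ℝ := fun z => (∫ y, p (z.1, y)) * stdNormalPDF z.2 with ht9
  set t10 : ℝ × ℝ → ℝ := fun z => stdNormalPDF z.1 * (∫ y, p (y, z.2)) with ht10
  -- integrability of the ten integrands
  have i1 : Integrable t1 ((volume : Measure ℝ).prod volume) := intT
  have i2 : Integrable t2 ((volume : Measure ℝ).prod volume) := ih1.mul_prod phi_integrable
  have i3 : Integrable t3 ((volume : Measure ℝ).prod volume) := phi_integrable.mul_prod ih2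
  have i4 : Integrable t4 ((volume : Measure ℝ).prod volume) :=
    phi_integrable.mul_prod phi_integrable
  have i5 : Integrable t5 ((volume : Measure ℝ).prod volume) := it5
  have i6 : Integrable t6 ((volume : Measure ℝ).prod volume) := it6.swap
  have i7 : Integrable p ((volume : Measure ℝ).prod volume) := int_p
  have i8 : Integrable t8 ((volume : Measure ℝ).prod volume) := int_P1.mul_prod int_P2
  have i9 : Integrable t9 ((volume : Measure ℝ).prod volume) := int_P1.mul_prod phi_integrable
  have i10 : Integrable t10 ((volume : Measure ℝ).prod volume) := phi_integrable.mul_prod int_P2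
  -- values of the ten integrals
  have v1 : (∫ z : ℝ × ℝ, t1 z ∂((volume : Measure ℝ).prod volume)) = Tt := by
    rw [hTt]; rfl
  have v2 : (∫ z : ℝ × ℝ, t2 z ∂((volume : Measure ℝ).prod volume)) = A := by
    have h := MeasureTheory.integral_prod_mul (μ := (volume : Measure ℝ))
      (ν := (volume : Measure ℝ)) (fun a : ℝ => (∫ y, p (a, y)) ^ 2 / stdNormalPDF a)
      stdNormalPDF
    beta_reduce at h
    rw [phi_integral, mul_one] at h
    exact h.trans hA.symm
  have v3 : (∫ z : ℝ × ℝ, t3 z ∂((volume : Measure ℝ).prod volume)) = B := by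
    have h := MeasureTheory.integral_prod_mul (μ := (volume : Measure ℝ))
      (ν := (volume : Measure ℝ)) stdNormalPDF
      (fun b : ℝ => (∫ y, p (y, b)) ^ 2 / stdNormalPDF b)
    beta_reduce at h
    rw [phi_integral, one_mul] at h
    exact h.trans hB.symm
  have v4 : (∫ z : ℝ × ℝ, t4 z ∂((volume : Measure ℝ).prod volume)) = 1 := by
    have h := MeasureTheory.integral_prod_mul (μ := (volume : Measure ℝ))
      (ν := (volume : Measure ℝ)) stdNormalPDF stdNormalPDF
    rw [phi_integral, mul_one] at h
    exact h
  have v5 : (∫ z : ℝ × ℝ, t5 z ∂((volume : Measure ℝ).prod volume)) = A := e5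
  have v6 : (∫ z : ℝ × ℝ, t6 z ∂((volume : Measure ℝ).prod volume)) = B := by
    have step1 : (∫ z : ℝ × ℝ, t6 z ∂((volume : Measure ℝ).prod volume))
        = ∫ z : ℝ × ℝ, (fun w : ℝ × ℝ =>
            p (w.2, w.1) * ((∫ y, p (y, w.1)) / stdNormalPDF w.1)) z.swap
          ∂((volume : Measure ℝ).prod volume) := rfl
    have h := MeasureTheory.integral_prod_swap (μ := (volume : Measure ℝ))
      (ν := (volume : Measure ℝ))
      (fun w : ℝ × ℝ => p (w.2, w.1) * ((∫ y, p (y, w.1)) / stdNormalPDF w.1))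
    exact step1.trans (h.trans e6)
  have v7 : (∫ z : ℝ × ℝ, p z ∂((volume : Measure ℝ).prod volume)) = 1 := hdens
  have v8 : (∫ z : ℝ × ℝ, t8 z ∂((volume : Measure ℝ).prod volume)) = 1 := by
    have h := MeasureTheory.integral_prod_mul (μ := (volume : Measure ℝ))
      (ν := (volume : Measure ℝ)) (fun a : ℝ => ∫ y, p (a, y)) (fun b : ℝ => ∫ y, p (y, b))
    beta_reduce at h
    rw [hP1_int, hP2_int, mul_one] at h
    exact h
  have v9 : (∫ z : ℝ × ℝ, t9 z ∂((volume : Measure ℝ).prod volume)) = 1 := by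
    have h := MeasureTheory.integral_prod_mul (μ := (volume : Measure ℝ))
      (ν := (volume : Measure ℝ)) (fun a : ℝ => ∫ y, p (a, y)) stdNormalPDF
    beta_reduce at h
    rw [hP1_int, phi_integral, mul_one] at h
    exact h
  have v10 : (∫ z : ℝ × ℝ, t10 z ∂((volume : Measure ℝ).prod volume)) = 1 := by
    have h := MeasureTheory.integral_prod_mul (μ := (volume : Measure ℝ))
      (ν := (volume : Measure ℝ)) stdNormalPDF (fun b : ℝ => ∫ y, p (y, b))
    beta_reduce at h
    rw [hP2_int, phi_integral, one_mul] at h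
    exact h
  -- pointwise expansion of the square
  have hexp : ∀ z : ℝ × ℝ,
      (p z / (stdNormalPDF z.1 * stdNormalPDF z.2) - (∫ y, p (z.1, y)) / stdNormalPDF z.1
        - (∫ y, p (y, z.2)) / stdNormalPDF z.2 + 1) ^ 2 * (stdNormalPDF z.1 * stdNormalPDF z.2)
      = (p z ^ 2 / (stdNormalPDF z.1 * stdNormalPDF z.2)
          + (∫ y, p (z.1, y)) ^ 2 / stdNormalPDF z.1 * stdNormalPDF z.2
          + stdNormalPDF z.1 * ((∫ y, p (y, z.2)) ^ 2 / stdNormalPDF z.2)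
          + stdNormalPDF z.1 * stdNormalPDF z.2
          + 2 * p z
          + 2 * ((∫ y, p (z.1, y)) * (∫ y, p (y, z.2))))
        - (2 * (p z * ((∫ y, p (z.1, y)) / stdNormalPDF z.1))
          + 2 * (p z * ((∫ y, p (y, z.2)) / stdNormalPDF z.2))
          + 2 * ((∫ y, p (z.1, y)) * stdNormalPDF z.2)
          + 2 * (stdNormalPDF z.1 * (∫ y, p (y, z.2)))) := by
    intro z
    have h1 : stdNormalPDF z.1 ≠ 0 := phi_ne _
    have h2 : stdNormalPDF z.2 ≠ 0 := phi_ne _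
    field_simp
    ring
  have hexp' : ∀ z : ℝ × ℝ,
      (p z / (stdNormalPDF z.1 * stdNormalPDF z.2) - (∫ y, p (z.1, y)) / stdNormalPDF z.1
        - (∫ y, p (y, z.2)) / stdNormalPDF z.2 + 1) ^ 2 * (stdNormalPDF z.1 * stdNormalPDF z.2)
      = (t1 z + t2 z + t3 z + t4 z + 2 * p z + 2 * t8 z)
        - (2 * t5 z + 2 * t6 z + 2 * t9 z + 2 * t10 z) := hexp
  have hpos : 0 ≤ ∫ z : ℝ × ℝ,
      (p z / (stdNormalPDF z.1 * stdNormalPDF z.2) - (∫ y, p (z.1, y)) / stdNormalPDF z.1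
        - (∫ y, p (y, z.2)) / stdNormalPDF z.2 + 1) ^ 2 * (stdNormalPDF z.1 * stdNormalPDF z.2)
      ∂((volume : Measure ℝ).prod volume) :=
    integral_nonneg fun z =>
      mul_nonneg (sq_nonneg _) (mul_nonneg (phi_pos _).le (phi_pos _).le)
  -- splitting lemmas
  have hPosI : Integrable (fun z : ℝ × ℝ => t1 z + t2 z + t3 z + t4 z + 2 * p z + 2 * t8 z)
      ((volume : Measure ℝ).prod volume) := by
    exact ((((i1.add i2).add i3).add i4).add (i7.const_mul 2)).add (i8.const_mul 2)
  have hNegI : Integrable (fun z : ℝ × ℝ => 2 * t5 z + 2 * t6 z + 2 * t9 z + 2 * t10 z)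
      ((volume : Measure ℝ).prod volume) := by
    exact (((i5.const_mul 2).add (i6.const_mul 2)).add (i9.const_mul 2)).add (i10.const_mul 2)
  have h0 : (∫ z : ℝ × ℝ, ((t1 z + t2 z + t3 z + t4 z + 2 * p z + 2 * t8 z)
        - (2 * t5 z + 2 * t6 z + 2 * t9 z + 2 * t10 z))
        ∂((volume : Measure ℝ).prod volume))
      = (∫ z : ℝ × ℝ, (t1 z + t2 z + t3 z + t4 z + 2 * p z + 2 * t8 z)
          ∂((volume : Measure ℝ).prod volume))
        - ∫ z : ℝ × ℝ, (2 * t5 z + 2 * t6 z + 2 * t9 z + 2 * t10 z)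
          ∂((volume : Measure ℝ).prod volume) := by
    exact MeasureTheory.integral_sub hPosI hNegI
  have h1 : (∫ z : ℝ × ℝ, (t1 z + t2 z + t3 z + t4 z + 2 * p z + 2 * t8 z)
        ∂((volume : Measure ℝ).prod volume))
      = (∫ z : ℝ × ℝ, (t1 z + t2 z + t3 z + t4 z + 2 * p z)
          ∂((volume : Measure ℝ).prod volume))
        + ∫ z : ℝ × ℝ, 2 * t8 z ∂((volume : Measure ℝ).prod volume) := by
    exact MeasureTheory.integral_add ((((i1.add i2).add i3).add i4).add (i7.const_mul 2))
      (i8.const_mul 2)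
  have h2 : (∫ z : ℝ × ℝ, (t1 z + t2 z + t3 z + t4 z + 2 * p z)
        ∂((volume : Measure ℝ).prod volume))
      = (∫ z : ℝ × ℝ, (t1 z + t2 z + t3 z + t4 z) ∂((volume : Measure ℝ).prod volume))
        + ∫ z : ℝ × ℝ, 2 * p z ∂((volume : Measure ℝ).prod volume) := by
    exact MeasureTheory.integral_add (((i1.add i2).add i3).add i4) (i7.const_mul 2)
  have h3 : (∫ z : ℝ × ℝ, (t1 z + t2 z + t3 z + t4 z) ∂((volume : Measure ℝ).prod volume))
      = (∫ z : ℝ × ℝ, (t1 z + t2 z + t3 z) ∂((volume : Measure ℝ).prod volume))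
        + ∫ z : ℝ × ℝ, t4 z ∂((volume : Measure ℝ).prod volume) := by
    exact MeasureTheory.integral_add ((i1.add i2).add i3) i4
  have h4 : (∫ z : ℝ × ℝ, (t1 z + t2 z + t3 z) ∂((volume : Measure ℝ).prod volume))
      = (∫ z : ℝ × ℝ, (t1 z + t2 z) ∂((volume : Measure ℝ).prod volume))
        + ∫ z : ℝ × ℝ, t3 z ∂((volume : Measure ℝ).prod volume) := by
    exact MeasureTheory.integral_add (i1.add i2) i3
  have h5 : (∫ z : ℝ × ℝ, (t1 z + t2 z) ∂((volume : Measure ℝ).prod volume))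
      = (∫ z : ℝ × ℝ, t1 z ∂((volume : Measure ℝ).prod volume))
        + ∫ z : ℝ × ℝ, t2 z ∂((volume : Measure ℝ).prod volume) := by
    exact MeasureTheory.integral_add i1 i2
  have n1 : (∫ z : ℝ × ℝ, (2 * t5 z + 2 * t6 z + 2 * t9 z + 2 * t10 z)
        ∂((volume : Measure ℝ).prod volume))
      = (∫ z : ℝ × ℝ, (2 * t5 z + 2 * t6 z + 2 * t9 z) ∂((volume : Measure ℝ).prod volume))
        + ∫ z : ℝ × ℝ, 2 * t10 z ∂((volume : Measure ℝ).prod volume) := by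
    exact MeasureTheory.integral_add (((i5.const_mul 2).add (i6.const_mul 2)).add
      (i9.const_mul 2)) (i10.const_mul 2)
  have n2 : (∫ z : ℝ × ℝ, (2 * t5 z + 2 * t6 z + 2 * t9 z)
        ∂((volume : Measure ℝ).prod volume))
      = (∫ z : ℝ × ℝ, (2 * t5 z + 2 * t6 z) ∂((volume : Measure ℝ).prod volume))
        + ∫ z : ℝ × ℝ, 2 * t9 z ∂((volume : Measure ℝ).prod volume) := by
    exact MeasureTheory.integral_add ((i5.const_mul 2).add (i6.const_mul 2)) (i9.const_mul 2)
  have n3 : (∫ z : ℝ × ℝ, (2 * t5 z + 2 * t6 z) ∂((volume : Measure ℝ).prod volume))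
      = (∫ z : ℝ × ℝ, 2 * t5 z ∂((volume : Measure ℝ).prod volume))
        + ∫ z : ℝ × ℝ, 2 * t6 z ∂((volume : Measure ℝ).prod volume) := by
    exact MeasureTheory.integral_add (i5.const_mul 2) (i6.const_mul 2)
  have m5 : (∫ z : ℝ × ℝ, 2 * t5 z ∂((volume : Measure ℝ).prod volume))
      = 2 * ∫ z : ℝ × ℝ, t5 z ∂((volume : Measure ℝ).prod volume) :=
    MeasureTheory.integral_const_mul 2 t5
  have m6 : (∫ z : ℝ × ℝ, 2 * t6 z ∂((volume : Measure ℝ).prod volume))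
      = 2 * ∫ z : ℝ × ℝ, t6 z ∂((volume : Measure ℝ).prod volume) :=
    MeasureTheory.integral_const_mul 2 t6
  have m7 : (∫ z : ℝ × ℝ, 2 * p z ∂((volume : Measure ℝ).prod volume))
      = 2 * ∫ z : ℝ × ℝ, p z ∂((volume : Measure ℝ).prod volume) :=
    MeasureTheory.integral_const_mul 2 p
  have m8 : (∫ z : ℝ × ℝ, 2 * t8 z ∂((volume : Measure ℝ).prod volume))
      = 2 * ∫ z : ℝ × ℝ, t8 z ∂((volume : Measure ℝ).prod volume) :=
    MeasureTheory.integral_const_mul 2 t8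
  have m9 : (∫ z : ℝ × ℝ, 2 * t9 z ∂((volume : Measure ℝ).prod volume))
      = 2 * ∫ z : ℝ × ℝ, t9 z ∂((volume : Measure ℝ).prod volume) :=
    MeasureTheory.integral_const_mul 2 t9
  have m10 : (∫ z : ℝ × ℝ, 2 * t10 z ∂((volume : Measure ℝ).prod volume))
      = 2 * ∫ z : ℝ × ℝ, t10 z ∂((volume : Measure ℝ).prod volume) :=
    MeasureTheory.integral_const_mul 2 t10
  have hcongr : (∫ z : ℝ × ℝ,
      (p z / (stdNormalPDF z.1 * stdNormalPDF z.2) - (∫ y, p (z.1, y)) / stdNormalPDF z.1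
        - (∫ y, p (y, z.2)) / stdNormalPDF z.2 + 1) ^ 2 * (stdNormalPDF z.1 * stdNormalPDF z.2)
      ∂((volume : Measure ℝ).prod volume))
      = ∫ z : ℝ × ℝ, ((t1 z + t2 z + t3 z + t4 z + 2 * p z + 2 * t8 z)
          - (2 * t5 z + 2 * t6 z + 2 * t9 z + 2 * t10 z))
        ∂((volume : Measure ℝ).prod volume) :=
    MeasureTheory.integral_congr_ae (Filter.Eventually.of_forall hexp')
  have hsum : (∫ z : ℝ × ℝ,
      (p z / (stdNormalPDF z.1 * stdNormalPDF z.2) - (∫ y, p (z.1, y)) / stdNormalPDF z.1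
        - (∫ y, p (y, z.2)) / stdNormalPDF z.2 + 1) ^ 2 * (stdNormalPDF z.1 * stdNormalPDF z.2)
      ∂((volume : Measure ℝ).prod volume))
      = (Tt + A + B + 1 + 2 * 1 + 2 * 1) - (2 * A + 2 * B + 2 * 1 + 2 * 1) := by
    rw [hcongr, h0, h1, h2, h3, h4, h5, n1, n2, n3, m5, m6, m7, m8, m9, m10,
      v1, v2, v3, v4, v5, v6, v7, v8, v9, v10]
  linarith [hpos, hsum]
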